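/- Let n ≥ 3 and m ≥ 2 be integers. Then the adjacency dimension of the jellyfish graph JFG(n, m) equals nm − 1; in particular, the set of all pendant vertices except the single pendant vertex v_{nm} is an adjacency resolving set of JFG(n, m). -/

import Mathlib

open SimpleGraph

/-- Vertex type of the jellyfish graph `JFG(n, m)`: cycle vertices (left) and
pendant vertices (right, a cycle vertex together with a pendant index). -/
abbrev JVert (n m : ℕ) := (ZMod n) ⊕ ((ZMod n) × Fin m)

/-- The jellyfish graph `JFG(n, m)`: the cycle `C_n` together with `m` pendant
vertices attached to each cycle vertex. -/
def jellyfish (n m : ℕ) : SimpleGraph (JVert n m) where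
  Adj u v :=
    match u, v with
    | Sum.inl i, Sum.inl j => i ≠ j ∧ (i - j = 1 ∨ j - i = 1)
    | Sum.inl i, Sum.inr p => p.1 = i
    | Sum.inr p, Sum.inl i => p.1 = i
    | Sum.inr _, Sum.inr _ => False
  symm := by
    constructor
    rintro (i | p) (j | q) h
    · exact ⟨h.1.symm, h.2.symm⟩
    · exact h
    · exact h
    · exact h
  loopless := by
    constructor
    rintro (i | p) h
    · exact h.1 rfl
    · exact h


open Classical in
/-- Adjacency representation coordinate: `0` if equal, `1` if adjacent, `2` otherwise. -/
noncomputable def aRep {V : Type*} (G : SimpleGraph V) (v w : V) : ℕ :=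
  if v = w then 0 else if G.Adj v w then 1 else 2

/-- `W` is an adjacency resolving set of `G`. -/
def IsAdjResolving {V : Type*} (G : SimpleGraph V) (W : Set V) : Prop :=
  ∀ u v : V, u ≠ v → ∃ w ∈ W, aRep G u w ≠ aRep G v w

/-- The adjacency dimension of `G`: the minimum cardinality of an adjacency
resolving set. -/
noncomputable def adjDim {V : Type*} (G : SimpleGraph V) : ℕ :=
  sInf {k | ∃ W : Set V, IsAdjResolving G W ∧ W.ncard = k}

lemma aRep_inl_inr (n m : ℕ) (i j : ZMod n) (k : Fin m) :
    aRep (jellyfish n m) (Sum.inl i) (Sum.inr (j, k)) = if j = i then 1 else 2 := by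
  simp only [aRep, jellyfish]
  split_ifs with h1 h2 h3 <;> simp_all

lemma aRep_inr_inl (n m : ℕ) (p : ZMod n × Fin m) (j : ZMod n) :
    aRep (jellyfish n m) (Sum.inr p) (Sum.inl j) = if p.1 = j then 1 else 2 := by
  simp only [aRep, jellyfish]
  split_ifs with h1 h2 h3 <;> simp_all

lemma aRep_inr_inr (n m : ℕ) (p q : ZMod n × Fin m) :
    aRep (jellyfish n m) (Sum.inr p) (Sum.inr q) = if p = q then 0 else 2 := by
  simp only [aRep, jellyfish]
  split_ifs with h1 h2 h3 <;> simp_all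

/-- Twin lemma: at most one pendant per cycle vertex can be missing from a resolving set. -/
lemma pend_twin {n m : ℕ} {W : Set (JVert n m)} (hW : IsAdjResolving (jellyfish n m) W)
    {i : ZMod n} {k l : Fin m} (hkl : k ≠ l)
    (hk : Sum.inr (i, k) ∉ W) : Sum.inr (i, l) ∈ W := by
  by_contra hl
  obtain ⟨w, hwW, hne⟩ := hW (Sum.inr (i, k)) (Sum.inr (i, l)) (by simp [hkl])
  apply hne
  match w with
  | Sum.inl j => rw [aRep_inr_inl, aRep_inr_inl]
  | Sum.inr q =>
    rw [aRep_inr_inr, aRep_inr_inr]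
    have h1 : (i, k) ≠ q := by rintro rfl; exact hk hwW
    have h2 : (i, l) ≠ q := by rintro rfl; exact hl hwW
    simp [h1, h2]

/-- Cross lemma: if pendants at two distinct cycle vertices are both missing,
then one of the two cycle vertices is in the resolving set. -/
lemma pend_cross {n m : ℕ} {W : Set (JVert n m)} (hW : IsAdjResolving (jellyfish n m) W)
    {i j : ZMod n} {k l : Fin m} (hij : i ≠ j)
    (hk : Sum.inr (i, k) ∉ W) (hl : Sum.inr (j, l) ∉ W) :
    Sum.inl i ∈ W ∨ Sum.inl j ∈ W := by
  obtain ⟨w, hwW, hne⟩ := hW (Sum.inr (i, k)) (Sum.inr (j, l)) (by simp [hij])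
  match w with
  | Sum.inl t =>
    rw [aRep_inr_inl, aRep_inr_inl] at hne
    rcases eq_or_ne i t with rfl | hi
    · exact Or.inl hwW
    rcases eq_or_ne j t with rfl | hj
    · exact Or.inr hwW
    · simp [hi, hj] at hne
  | Sum.inr q =>
    exfalso
    apply hne
    rw [aRep_inr_inr, aRep_inr_inr]
    have h1 : (i, k) ≠ q := by rintro rfl; exact hk hwW
    have h2 : (j, l) ≠ q := by rintro rfl; exact hl hwW
    simp [h1, h2]

/-- The set of all pendant vertices except one is an adjacency resolving set. -/
lemma jelly_resolving (n m : ℕ) (hn : 3 ≤ n) (hm : 2 ≤ m) :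
    IsAdjResolving (jellyfish n m)
      (Set.range (Sum.inr : ZMod n × Fin m → JVert n m) \
        {Sum.inr ((n : ZMod n), (⟨m - 1, Nat.sub_one_lt (by omega)⟩ : Fin m))}) := by
  set w0 : ZMod n × Fin m := ((n : ZMod n), (⟨m - 1, by omega⟩ : Fin m)) with hw0
  have hmem : ∀ p : ZMod n × Fin m, p ≠ w0 →
      Sum.inr p ∈ (Set.range (Sum.inr : ZMod n × Fin m → JVert n m) \ {Sum.inr w0}) := by
    intro p hp
    exact ⟨⟨p, rfl⟩, by simp [hp]⟩
  have hzero : ∀ i : ZMod n, ((i, (⟨0, by omega⟩ : Fin m)) : ZMod n × Fin m) ≠ w0 := by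
    intro i h
    have := congrArg (fun p => (p.2 : ℕ)) h
    simp [hw0] at this
    omega
  rintro (i | p) (j | q) huv
  · -- two cycle vertices
    refine ⟨Sum.inr (i, ⟨0, by omega⟩), hmem _ (hzero i), ?_⟩
    rw [aRep_inl_inr, aRep_inl_inr]
    have hij : i ≠ j := by simpa using huv
    simp [hij]
  · -- cycle vs pendant
    refine ⟨Sum.inr (i, ⟨0, by omega⟩), hmem _ (hzero i), ?_⟩
    rw [aRep_inl_inr, aRep_inr_inr]
    split_ifs <;> simp_all
  · -- pendant vs cycle
    refine ⟨Sum.inr (j, ⟨0, by omega⟩), hmem _ (hzero j), ?_⟩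
    rw [aRep_inl_inr, aRep_inr_inr]
    split_ifs <;> simp_all
  · -- two pendants
    have hpq : p ≠ q := by simpa using huv
    rcases eq_or_ne p w0 with rfl | hp
    · refine ⟨Sum.inr q, hmem q (by rintro rfl; exact hpq rfl), ?_⟩
      rw [aRep_inr_inr, aRep_inr_inr]
      simp [hpq]
    · refine ⟨Sum.inr p, hmem p hp, ?_⟩
      rw [aRep_inr_inr, aRep_inr_inr]
      simp [hpq.symm]

/-- Lower bound: any adjacency resolving set of the jellyfish graph has at
least `n * m - 1` elements. -/
lemma jelly_lower {n m : ℕ} (hn : 3 ≤ n) (hm : 2 ≤ m) {W : Set (JVert n m)}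
    (hW : IsAdjResolving (jellyfish n m) W) : n * m - 1 ≤ W.ncard := by
  haveI : NeZero n := ⟨by omega⟩
  classical
  set P : Set (JVert n m) := Set.range Sum.inr with hP
  set M : Set (JVert n m) := P \ W with hM
  -- the "first coordinate" map
  set g : JVert n m → ZMod n := fun u => match u with
    | Sum.inl i => i
    | Sum.inr p => p.1 with hg
  set S : Set (ZMod n) := g '' M with hS
  have hMP : M ⊆ P := Set.diff_subset
  -- card of P
  have hcardP : P.ncard = n * m := by
    rw [hP, Set.ncard_eq_toFinset_card', Set.toFinset_range]
    rw [Finset.card_image_of_injective _ Sum.inr_injective]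
    simp [ZMod.card]
  -- M injects into S
  have hinj : Set.InjOn g M := by
    rintro u hu v hv hguv
    obtain ⟨⟨p, rfl⟩, hpu⟩ := hu
    obtain ⟨⟨q, rfl⟩, hqu⟩ := hv
    simp only [hg] at hguv
    obtain ⟨i, k⟩ := p
    obtain ⟨j, l⟩ := q
    simp only at hguv
    subst hguv
    rcases eq_or_ne k l with rfl | hkl
    · rfl
    · exact absurd (pend_twin hW hkl hpu) hqu
  have hcardM : M.ncard = S.ncard := (Set.ncard_image_of_injOn hinj).symm
  -- pendant part of W
  have hPW : P ∩ W = P \ M := by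
    ext u; simp only [hM, Set.mem_inter_iff, Set.mem_diff]; tauto
  have hcardPW : (P ∩ W).ncard = n * m - S.ncard := by
    rw [hPW, Set.ncard_diff hMP M.toFinite, hcardP, hcardM]
  -- the bad cycle vertices
  set T : Set (ZMod n) := {i ∈ S | Sum.inl i ∉ W} with hT
  have hTsub : T ⊆ S := fun i hi => hi.1
  have hT1 : T.ncard ≤ 1 := by
    rw [Set.ncard_le_one_iff_eq]
    rcases Set.eq_empty_or_nonempty T with h | ⟨i, hi⟩
    · exact Or.inl h
    · right
      refine ⟨i, Set.eq_singleton_iff_unique_mem.mpr ⟨hi, fun j hj => ?_⟩⟩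
      by_contra hji
      obtain ⟨⟨u, hu, hgu⟩, hiW⟩ := hi
      obtain ⟨⟨v, hv, hgv⟩, hjW⟩ := hj
      obtain ⟨⟨p, rfl⟩, hpu⟩ := hu
      obtain ⟨⟨q, rfl⟩, hqu⟩ := hv
      obtain ⟨i', k⟩ := p; obtain ⟨j', l⟩ := q
      simp only [hg] at hgu hgv
      subst hgu; subst hgv
      rcases pend_cross hW (Ne.symm hji) hpu hqu with h | h
      · exact hiW h
      · exact hjW h
  -- cycle part of W
  have hsub2 : Sum.inl '' (S \ T) ⊆ W \ P := by
    rintro _ ⟨i, ⟨hiS, hiT⟩, rfl⟩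
    refine ⟨?_, by simp [hP]⟩
    by_contra h
    exact hiT ⟨hiS, h⟩
  have hcard2 : S.ncard - 1 ≤ (W \ P).ncard := by
    have h1 : (S \ T).ncard = S.ncard - T.ncard :=
      Set.ncard_diff hTsub T.toFinite
    have h2 : ((Sum.inl : ZMod n → JVert n m) '' (S \ T)).ncard = (S \ T).ncard :=
      Set.ncard_image_of_injective _ Sum.inl_injective
    have h3 := Set.ncard_le_ncard hsub2 (W \ P).toFinite
    omega
  have hsplit : (W ∩ P).ncard + (W \ P).ncard = W.ncard :=
    Set.ncard_inter_add_ncard_diff_eq_ncard W P W.toFinite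
  rw [Set.inter_comm] at hsplit
  omega

theorem jellyfish_adjDim (n m : ℕ) (hn : 3 ≤ n) (hm : 2 ≤ m) :
    adjDim (jellyfish n m) = n * m - 1 ∧
    IsAdjResolving (jellyfish n m)
      (Set.range (Sum.inr : ZMod n × Fin m → JVert n m) \
        {Sum.inr ((n : ZMod n), (⟨m - 1, by omega⟩ : Fin m))}) := by
  haveI : NeZero n := ⟨by omega⟩
  have hres := jelly_resolving n m hn hm
  refine ⟨?_, hres⟩
  have hcard : (Set.range (Sum.inr : ZMod n × Fin m → JVert n m) \
      {Sum.inr ((n : ZMod n), (⟨m - 1, by omega⟩ : Fin m))}).ncard = n * m - 1 := by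
    rw [Set.ncard_diff_singleton_of_mem (Set.mem_range_self _)]
    congr 1
    rw [Set.ncard_eq_toFinset_card', Set.toFinset_range,
      Finset.card_image_of_injective _ Sum.inr_injective]
    simp [ZMod.card]
  have hmem : n * m - 1 ∈
      {k | ∃ W : Set (JVert n m), IsAdjResolving (jellyfish n m) W ∧ W.ncard = k} :=
    ⟨_, hres, hcard⟩
  refine le_antisymm (Nat.sInf_le hmem) (le_csInf ⟨_, hmem⟩ ?_)
  rintro k ⟨W, hW, rfl⟩
  exact jelly_lower hn hm hW
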